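/- Let G be a finitely generated powerful pro-p group with torsion subgroup T, and let U be a uniformly powerful open normal subgroup of G with U ⊆ C_G(T) and U ⊆ Φ(G). Then there exists k ∈ ℕ such that every element x of G with x^p ∈ U^{p^k} lies in N = U × T; that is, Ω₁(G/U^{p^k}) = Ω₁(N/U^{p^k}). -/

import Mathlib

open scoped Pointwise

/-- Minimal number of topological generators of a topological group, as an extended natural. -/
noncomputable def ngen (G : Type*) [Group G] [TopologicalSpace G] [IsTopologicalGroup G] : ℕ∞ :=
  sInf {n : ℕ∞ | ∃ S : Finset G, (S.card : ℕ∞) = n ∧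
    (Subgroup.closure (S : Set G)).topologicalClosure = ⊤}

/-- `d(H)`: minimal number of topological generators of a subgroup. -/
noncomputable def dsub {G : Type*} [Group G] [TopologicalSpace G] [IsTopologicalGroup G] (H : Subgroup G) : ℕ∞ :=
  ngen H

/-- The Prüfer rank of a topological group: `sup { d(H) | H open subgroup }`. -/
noncomputable def prank (G : Type*) [Group G] [TopologicalSpace G] [IsTopologicalGroup G] : ℕ∞ :=
  ⨆ H ∈ {H : Subgroup G | IsOpen (H : Set G)}, dsub H

/-- A topological group is pro-`p` if all its quotients by open normal subgroups are `p`-groups. -/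
def IsProP (p : ℕ) (G : Type*) [Group G] [TopologicalSpace G] : Prop :=
  ∀ (N : Subgroup G) [N.Normal], IsOpen (N : Set G) → IsPGroup p (G ⧸ N)

/-- A topological group is pronilpotent if all its quotients by open normal subgroups
are nilpotent. -/
def Pronilpotent (G : Type*) [Group G] [TopologicalSpace G] : Prop :=
  ∀ (N : Subgroup G) [N.Normal], IsOpen (N : Set G) → Group.IsNilpotent (G ⧸ N)

/-- `rk_p(G)`: the rank of a Sylow pro-`p` subgroup, i.e. the supremum of `d(K)`
over closed pro-`p` subgroups `K`. -/
noncomputable def rkP (G : Type*) [Group G] [TopologicalSpace G] [IsTopologicalGroup G] (p : ℕ) : ℕ∞ :=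
  ⨆ K ∈ {K : Subgroup G | IsClosed (K : Set G) ∧ IsProP p K}, dsub K

/-- The topological Frattini subgroup: intersection of all maximal open subgroups. -/
def frattiniTop (G : Type*) [Group G] [TopologicalSpace G] : Subgroup G :=
  ⨅ M ∈ {M : Subgroup G | IsOpen (M : Set G) ∧ IsCoatom M}, M

/-- One step of the iterated Frattini series, as an operation on subgroups. -/
def frattiniStep {G : Type*} [Group G] [TopologicalSpace G] (H : Subgroup G) : Subgroup G :=
  (frattiniTop H).map H.subtype

/-- A pro-`p` group is powerful if `[P,P]` is contained in the closed subgroup generated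
by `p`-th powers (`4`-th powers for `p = 2`). -/
def IsPowerful (p : ℕ) (P : Type*) [Group P] [TopologicalSpace P] [IsTopologicalGroup P] : Prop :=
  ⁅(⊤ : Subgroup P), (⊤ : Subgroup P)⁆ ≤
    (Subgroup.closure {x : P | ∃ g : P, g ^ (if p = 2 then 4 else p) = x}).topologicalClosure

/-- For a finitely generated powerful pro-`p` group `G` with torsion subgroup
`T` and a uniformly powerful open normal subgroup `U ≤ C_G(T) ∩ Φ(G)`, there is `k ∈ ℕ` such
that every `x ∈ G` with `x^p ∈ U^{p^k}` lies in `N = U ⬝ T`; equivalently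
`Ω₁(G/U^{p^k}) = Ω₁(N/U^{p^k})`. -/
theorem exists_pow_level_omega_in_torsion_product
    (p : ℕ) (hp : p.Prime)
    (G : Type*) [Group G] [TopologicalSpace G] [IsTopologicalGroup G]
    [CompactSpace G] [T2Space G] [TotallyDisconnectedSpace G]
    (hG : IsProP p G) (hfg : ngen G ≠ ⊤) (hpow : IsPowerful p G)
    (T : Subgroup G) (hT : (T : Set G) = {g : G | IsOfFinOrder g})
    (U : Subgroup G) [U.Normal] (hUopen : IsOpen (U : Set G))
    (hUpow : IsPowerful p U) (hUtf : ∀ x : U, IsOfFinOrder x → x = 1)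
    (hUC : U ≤ Subgroup.centralizer (T : Set G)) (hUPhi : U ≤ frattiniTop G) :
    ∃ k : ℕ, ∀ x : G,
      x ^ p ∈ (Subgroup.closure {y : G | ∃ u ∈ U, u ^ (p ^ k) = y}).topologicalClosure →
      x ∈ U ⊔ T := by
  classical
  by_contra hcon
  push_neg at hcon
  set K : ℕ → Subgroup G := fun k =>
    (Subgroup.closure {y : G | ∃ u ∈ U, u ^ (p ^ k) = y}).topologicalClosure with hK
  set B : ℕ → Set G := fun k => {x : G | x ^ p ∈ K k ∧ x ∉ (U ⊔ T : Subgroup G)} with hB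
  have hNopen : IsOpen ((U ⊔ T : Subgroup G) : Set G) := Subgroup.isOpen_mono le_sup_left hUopen
  have hBclosed : ∀ k, IsClosed (B k) := by
    intro k
    have h1 : IsClosed ((fun x : G => x ^ p) ⁻¹' (K k : Set G)) :=
      (Subgroup.isClosed_topologicalClosure _).preimage (continuous_pow p)
    exact h1.inter hNopen.isClosed_compl
  have hBanti : ∀ k, B (k + 1) ⊆ B k := by
    intro k x hx
    refine ⟨?_, hx.2⟩
    have hle : K (k + 1) ≤ K k := by
      apply Subgroup.topologicalClosure_minimal
      · apply Subgroup.closure_le _ |>.mpr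
        intro y hy
        obtain ⟨u, hu, rfl⟩ := hy
        have : (u ^ p) ^ (p ^ k) = u ^ p ^ (k + 1) := by
          rw [← pow_mul, ← pow_succ']
        exact Subgroup.le_topologicalClosure _
          (Subgroup.subset_closure ⟨u ^ p, U.pow_mem hu p, this⟩)
      · exact Subgroup.isClosed_topologicalClosure _
    exact hle hx.1
  have hBne : ∀ k, (B k).Nonempty := fun k => by
    obtain ⟨x, hx1, hx2⟩ := hcon k
    exact ⟨x, hx1, hx2⟩
  obtain ⟨x, hx⟩ := IsCompact.nonempty_iInter_of_sequence_nonempty_isCompact_isClosed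
    B hBanti hBne ((hBclosed 0).isCompact) hBclosed
  simp only [Set.mem_iInter] at hx
  have hxN : x ∉ (U ⊔ T : Subgroup G) := (hx 0).2
  -- show x ^ p = 1
  have hxp : x ^ p = 1 := by
    by_contra hg
    have h1g : (1 : G) ∈ ({x ^ p}ᶜ : Set G) := by
      simp only [Set.mem_compl_iff, Set.mem_singleton_iff]
      exact fun h => hg h.symm
    obtain ⟨V, hVclopen, h1V, hVsub⟩ :=
      compact_exists_isClopen_in_isOpen isOpen_compl_singleton h1g
    obtain ⟨H, hHV⟩ :=
      IsTopologicalGroup.exist_openNormalSubgroup_sub_clopen_nhds_of_one hVclopen h1V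
    have hHopen : IsOpen ((H : Subgroup G) : Set G) := H.toOpenSubgroup.isOpen
    have : Finite (G ⧸ (H : Subgroup G)) :=
      Subgroup.quotient_finite_of_isOpen _ hHopen
    haveI : Fact p.Prime := ⟨hp⟩
    have hpg : IsPGroup p (G ⧸ (H : Subgroup G)) := hG _ hHopen
    obtain ⟨n, hn⟩ := IsPGroup.iff_card.mp hpg
    have hKH : K n ≤ (H : Subgroup G) := by
      apply Subgroup.topologicalClosure_minimal
      · apply Subgroup.closure_le _ |>.mpr
        intro y hy
        obtain ⟨u, hu, rfl⟩ := hy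
        have : ((u : G) ^ p ^ n : G) ∈ (H : Subgroup G) := by
          rw [← QuotientGroup.eq_one_iff, QuotientGroup.mk_pow]
          rw [← hn]
          exact pow_card_eq_one'
        exact this
      · exact Subgroup.isClosed_of_isOpen _ hHopen
    exact hVsub (hHV (hKH (hx n).1)) rfl
  have hxT : x ∈ T := by
    have : x ∈ (T : Set G) := by
      rw [hT]
      exact isOfFinOrder_iff_pow_eq_one.mpr ⟨p, hp.pos, hxp⟩
    exact this
  exact hxN (Subgroup.mem_sup_right hxT)
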